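/- arXiv:1310.2275 — 3 statements merged into one kernel-verified Lean document; each statement's English description precedes it below -/
import Mathlib

section
/- Let n > 4. Define the sequence (α_k) by α_0 = 0 and α_{k+1} = (4(α_k + 1) - n + √(n(16 α_k^2 + 24 α_k + n + 8))) / (4(n - 1)). Then (α_k) is nonnegative, increasing, bounded above by 2/(n-4), and converges to 2/(n-4). -/
open Filter Real

private lemma alpha_step (n x : ℝ) (hn : 4 < n) (hx0 : 0 ≤ x) (hxL : (n - 4) * x ≤ 2) :
    x ≤ (4 * (x + 1) - n + Real.sqrt (n * (16 * x ^ 2 + 24 * x + n + 8))) / (4 * (n - 1)) ∧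
    (n - 4) * ((4 * (x + 1) - n + Real.sqrt (n * (16 * x ^ 2 + 24 * x + n + 8))) / (4 * (n - 1)))
      ≤ 2 := by
  have hd : (0:ℝ) < 4 * (n - 1) := by linarith
  set s := Real.sqrt (n * (16 * x ^ 2 + 24 * x + n + 8)) with hs_def
  have harg : 0 ≤ n * (16 * x ^ 2 + 24 * x + n + 8) := by nlinarith
  have hs0 : 0 ≤ s := Real.sqrt_nonneg _
  have hs_sq : s ^ 2 = n * (16 * x ^ 2 + 24 * x + n + 8) := Real.sq_sqrt harg
  -- lower bound on s
  have ha0 : 0 ≤ 4 * (n - 2) * x + (n - 4) := by nlinarith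
  have ha_sq : (4 * (n - 2) * x + (n - 4)) ^ 2 ≤ s ^ 2 := by
    rw [hs_sq]
    nlinarith [mul_nonneg (mul_nonneg (by linarith : (0:ℝ) ≤ n - 1)
      (by linarith : (0:ℝ) ≤ 2 - (n - 4) * x)) (by linarith : (0:ℝ) ≤ 2 * x + 1)]
  have ha : 4 * (n - 2) * x + (n - 4) ≤ s := by nlinarith
  -- upper bound on (n-4) * s
  have hb0 : 0 ≤ 8 * (n - 1) + (n - 4) ^ 2 - 4 * (n - 4) * x := by nlinarith
  have hb_sq : ((n - 4) * s) ^ 2 ≤ (8 * (n - 1) + (n - 4) ^ 2 - 4 * (n - 4) * x) ^ 2 := by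
    have : ((n - 4) * s) ^ 2 = (n - 4) ^ 2 * (n * (16 * x ^ 2 + 24 * x + n + 8)) := by
      rw [mul_pow, hs_sq]
    rw [this]
    nlinarith [mul_nonneg (mul_nonneg (by linarith : (0:ℝ) ≤ n - 1)
      (by linarith : (0:ℝ) ≤ 2 - (n - 4) * x))
      (by nlinarith : (0:ℝ) ≤ (n - 4) * x + 2 * (n - 1))]
  have hcs0 : 0 ≤ (n - 4) * s := mul_nonneg (by linarith) hs0
  have hb : (n - 4) * s ≤ 8 * (n - 1) + (n - 4) ^ 2 - 4 * (n - 4) * x := by nlinarith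
  constructor
  · rw [le_div_iff₀ hd]; linarith
  · rw [← mul_div_assoc, div_le_iff₀ hd]
    nlinarith

/-- The sequence α_k defined by α_0 = 0 and the stated recursion is nonnegative,
increasing, bounded above by 2/(n-4), and converges to 2/(n-4), for n > 4. -/
theorem alpha_seq_props (n : ℝ) (hn : 4 < n) (α : ℕ → ℝ)
    (h0 : α 0 = 0)
    (hrec : ∀ k, α (k + 1) =
      (4 * (α k + 1) - n + Real.sqrt (n * (16 * (α k) ^ 2 + 24 * α k + n + 8))) / (4 * (n - 1))) :
    (∀ k, 0 ≤ α k) ∧ Monotone α ∧ (∀ k, α k ≤ 2 / (n - 4)) ∧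
      Tendsto α atTop (nhds (2 / (n - 4))) := by
  have hn4 : (0:ℝ) < n - 4 := by linarith
  -- invariant by induction
  have key : ∀ k, 0 ≤ α k ∧ (n - 4) * α k ≤ 2 := by
    intro k
    induction k with
    | zero => rw [h0]; constructor <;> norm_num
    | succ k ih =>
      obtain ⟨h1, h2⟩ := ih
      obtain ⟨hle, hub⟩ := alpha_step n (α k) hn h1 h2
      rw [hrec k]
      exact ⟨le_trans h1 hle, hub⟩
  have hmono : Monotone α := by
    apply monotone_nat_of_le_succ
    intro k
    obtain ⟨h1, h2⟩ := key k
    rw [hrec k]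
    exact (alpha_step n (α k) hn h1 h2).1
  have hub : ∀ k, α k ≤ 2 / (n - 4) := by
    intro k
    rw [le_div_iff₀ hn4]
    have := (key k).2
    linarith [this]
  have hbdd : BddAbove (Set.range α) := ⟨2 / (n - 4), by rintro _ ⟨k, rfl⟩; exact hub k⟩
  have hT : Tendsto α atTop (nhds (⨆ k, α k)) := tendsto_atTop_ciSup hmono hbdd
  set L := ⨆ k, α k with hL
  have hL0 : 0 ≤ L := h0 ▸ le_ciSup hbdd 0
  have hLub : L ≤ 2 / (n - 4) := ciSup_le hub
  have hLub' : (n - 4) * L ≤ 2 := by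
    rw [le_div_iff₀ hn4] at hLub; linarith
  -- the limit is a fixed point
  have hcont : Continuous (fun x : ℝ =>
      (4 * (x + 1) - n + Real.sqrt (n * (16 * x ^ 2 + 24 * x + n + 8))) / (4 * (n - 1))) := by
    apply Continuous.div_const
    apply Continuous.add (by continuity)
    exact Real.continuous_sqrt.comp (by continuity)
  have h1 : Tendsto (fun k => α (k + 1)) atTop (nhds L) :=
    hT.comp (tendsto_add_atTop_nat 1)
  have h2 : Tendsto (fun k => α (k + 1)) atTop (nhds
      ((4 * (L + 1) - n + Real.sqrt (n * (16 * L ^ 2 + 24 * L + n + 8))) / (4 * (n - 1)))) := by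
    have := (hcont.tendsto L).comp hT
    convert this using 2 with k
    · exact hrec k
  have hfix : L = (4 * (L + 1) - n + Real.sqrt (n * (16 * L ^ 2 + 24 * L + n + 8)))
      / (4 * (n - 1)) := tendsto_nhds_unique h1 h2
  -- solve the fixed point equation
  have hd : (0:ℝ) < 4 * (n - 1) := by linarith
  set s := Real.sqrt (n * (16 * L ^ 2 + 24 * L + n + 8)) with hs_def
  have harg : 0 ≤ n * (16 * L ^ 2 + 24 * L + n + 8) := by nlinarith
  have hs0 : 0 ≤ s := Real.sqrt_nonneg _
  have hs_sq : s ^ 2 = n * (16 * L ^ 2 + 24 * L + n + 8) := Real.sq_sqrt harg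
  have hseq : s = 4 * (n - 2) * L + (n - 4) := by
    have := hfix
    rw [eq_div_iff (ne_of_gt hd)] at this
    linarith
  have hprod : 8 * (n - 1) * ((2 - (n - 4) * L) * (2 * L + 1)) = 0 := by
    nlinarith [hs_sq, hseq]
  have hfactor : 2 - (n - 4) * L = 0 := by
    rcases mul_eq_zero.1 hprod with h | h
    · exfalso; nlinarith
    · rcases mul_eq_zero.1 h with h' | h'
      · exact h'
      · exfalso; nlinarith
  have hLval : L = 2 / (n - 4) := by
    rw [eq_div_iff (ne_of_gt hn4)]; linarith
  refine ⟨fun k => (key k).1, hmono, hub, ?_⟩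
  rw [← hLval]; exact hT
end

section
/- Let n > 4, p > (n+4)/(n-4), and let 0 ≤ α_k ≤ α_{k+1} ≤ 2/(n-4) and 0 < β_k ≤ β_{k+1}. Define I³ := (4/n) α_{k+1} β_k (α_{k+1} + α_k + 1) + α_{k+1} β_{k+1} + β_{k+1} ((p+1)/2)((p+1)/2 - 3α_{k+1} - 1). Then β_{k+1} ((p+1)/2 - α_{k+1})^2 - I³ ≥ β_{k+1} ( ((n-4)/n) α_{k+1}^2 + (α_{k+1} + 1)((p-1)/2 - (4/n)(2/(n-4))) ) > 0. -/
/-- The key positivity of β_{k+1}((p+1)/2 - α_{k+1})² - I³ for the iteration. -/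
theorem I3_upper_bound (n p αk αk1 βk βk1 : ℝ) (hn : 4 < n)
    (hp : p > (n + 4) / (n - 4))
    (hα0 : 0 ≤ αk) (hα1 : αk ≤ αk1) (hα2 : αk1 ≤ 2 / (n - 4))
    (hβ0 : 0 < βk) (hβ1 : βk ≤ βk1) :
    let I3 := (4 / n) * αk1 * βk * (αk1 + αk + 1) + αk1 * βk1 +
      βk1 * ((p + 1) / 2) * ((p + 1) / 2 - 3 * αk1 - 1)
    βk1 * ((p + 1) / 2 - αk1) ^ 2 - I3 ≥
      βk1 * (((n - 4) / n) * αk1 ^ 2 + (αk1 + 1) * ((p - 1) / 2 - (4 / n) * (2 / (n - 4)))) ∧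
    βk1 * (((n - 4) / n) * αk1 ^ 2 + (αk1 + 1) * ((p - 1) / 2 - (4 / n) * (2 / (n - 4)))) > 0 := by
  intro I3
  have h4 : (0:ℝ) < n - 4 := by linarith
  have hn0 : (0:ℝ) < n := by linarith
  have hβ1' : 0 < βk1 := lt_of_lt_of_le hβ0 hβ1
  have hα1' : 0 ≤ αk1 := le_trans hα0 hα1
  have hA : αk1 * (n - 4) ≤ 2 := (le_div_iff₀ h4).mp hα2
  have hA2 : αk1 * (n - 4) ≤ 2 := hA
  have hp' : p * (n - 4) > n + 4 := by
    rw [gt_iff_lt, div_lt_iff₀ h4] at hp; linarith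
  constructor
  · rw [ge_iff_le, ← sub_nonneg]
    have e : βk1 * ((p + 1) / 2 - αk1) ^ 2 - I3 -
        βk1 * (((n - 4) / n) * αk1 ^ 2 + (αk1 + 1) * ((p - 1) / 2 - (4 / n) * (2 / (n - 4)))) =
        (4 * (n - 4) * (βk1 * αk1 ^ 2 - αk1 * βk * (αk1 + αk + 1)) + n * (n - 4) * βk1 +
          8 * βk1 * (αk1 + 1)) / (n * (n - 4)) := by
      show βk1 * ((p + 1) / 2 - αk1) ^ 2 -
        ((4 / n) * αk1 * βk * (αk1 + αk + 1) + αk1 * βk1 +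
          βk1 * ((p + 1) / 2) * ((p + 1) / 2 - 3 * αk1 - 1)) - _ = _
      field_simp
      ring
    rw [e]
    apply div_nonneg _ (by positivity)
    nlinarith [mul_nonneg (mul_nonneg hα1' (sub_nonneg.2 hβ1)) h4.le,
      mul_nonneg (mul_nonneg (mul_nonneg hα1' (sub_nonneg.2 hα1)) hβ0.le) h4.le,
      mul_nonneg (mul_nonneg (sub_nonneg.2 hA) hβ1'.le) (by linarith : (0:ℝ) ≤ αk1 + 1),
      mul_pos hn0 h4, mul_nonneg hα1' hβ1'.le]
  · apply mul_pos hβ1'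
    have h1 : 0 ≤ ((n - 4) / n) * αk1 ^ 2 := by positivity
    have h2 : (4 / n) * (2 / (n - 4)) = 8 / (n * (n - 4)) := by
      rw [div_mul_div_comm]; norm_num
    have h3 : 8 / (n * (n - 4)) < (p - 1) / 2 := by
      rw [div_lt_div_iff₀ (by positivity) (by norm_num)]
      nlinarith
    nlinarith [mul_lt_mul_of_pos_left (h2 ▸ h3) (by linarith : (0:ℝ) < αk1 + 1)]
end

section
/- Let u : ℝⁿ → ℝ be a positive C² function, ε > 0, α > 0, β > 0 real constants with p + 1 > 2α, a ≥ 0, and set w = Δu + α |∇u|²/(u+ε) + β |x|^{a/2} u^{(p+1)/2} and w̃ = (u+ε)^{-α} w. Suppose Δu ≤ 0 and w satisfies Δw - 2α(u+ε)^{-1} ∇u·∇w + α w (u+ε)^{-2}|∇u|² - (β(p+1)/2)|x|^{a/2} u^{(p-1)/2} w ≥ 0 on ℝⁿ. Then Δw̃ ≥ 0 at every point where w ≥ 0. -/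
open MeasureTheory RealInnerProductSpace

/-- The Laplacian of a function on Euclidean space. -/
noncomputable def laplacian {n : ℕ} (u : EuclideanSpace ℝ (Fin n) → ℝ)
    (x : EuclideanSpace ℝ (Fin n)) : ℝ :=
  ∑ i : Fin n, iteratedFDeriv ℝ 2 u x ![EuclideanSpace.single i 1, EuclideanSpace.single i 1]

namespace SubhAux

variable {n : ℕ}

noncomputable def ee (i : Fin n) : EuclideanSpace ℝ (Fin n) := EuclideanSpace.single i 1

lemma lap_eq (f : EuclideanSpace ℝ (Fin n) → ℝ) (x : EuclideanSpace ℝ (Fin n)) :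
    laplacian f x = ∑ i, fderiv ℝ (fderiv ℝ f) x (ee i) (ee i) := by
  unfold laplacian
  refine Finset.sum_congr rfl fun i _ => ?_
  rw [iteratedFDeriv_two_apply]
  simp [ee]

lemma lap_congr {f g : EuclideanSpace ℝ (Fin n) → ℝ} {x : EuclideanSpace ℝ (Fin n)}
    (h : f =ᶠ[nhds x] g) : laplacian f x = laplacian g x := by
  simp only [lap_eq]
  rw [h.fderiv.fderiv_eq]

lemma grad_congr {f g : EuclideanSpace ℝ (Fin n) → ℝ} {x : EuclideanSpace ℝ (Fin n)}
    (h : f =ᶠ[nhds x] g) : gradient f x = gradient g x := by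
  unfold gradient
  rw [h.fderiv_eq]

lemma inner_grad (f : EuclideanSpace ℝ (Fin n) → ℝ) (x v : EuclideanSpace ℝ (Fin n)) :
    ⟪gradient f x, v⟫ = fderiv ℝ f x v :=
  InnerProductSpace.toDual_symm_apply

lemma grad_coord (f : EuclideanSpace ℝ (Fin n) → ℝ) (x : EuclideanSpace ℝ (Fin n)) (i : Fin n) :
    gradient f x i = fderiv ℝ f x (ee i) := by
  rw [← inner_grad]
  simp only [ee, EuclideanSpace.inner_single_right]
  simp

lemma inner_grad_sum (f g : EuclideanSpace ℝ (Fin n) → ℝ) (x : EuclideanSpace ℝ (Fin n)) :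
    ⟪gradient f x, gradient g x⟫ = ∑ i, fderiv ℝ f x (ee i) * fderiv ℝ g x (ee i) := by
  rw [PiLp.inner_apply]
  refine Finset.sum_congr rfl fun i _ => ?_
  rw [← grad_coord, ← grad_coord]
  simp [RCLike.inner_apply, mul_comm]

lemma norm_grad_sq (f : EuclideanSpace ℝ (Fin n) → ℝ) (x : EuclideanSpace ℝ (Fin n)) :
    ‖gradient f x‖ ^ 2 = ∑ i, fderiv ℝ f x (ee i) * fderiv ℝ f x (ee i) := by
  rw [← real_inner_self_eq_norm_sq, inner_grad_sum]

lemma laplacian_mul {f g : EuclideanSpace ℝ (Fin n) → ℝ} {x : EuclideanSpace ℝ (Fin n)}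
    (hf : ContDiffAt ℝ 2 f x) (hg : ContDiffAt ℝ 2 g x) :
    laplacian (fun y => f y * g y) x
      = f x * laplacian g x + 2 * ⟪gradient f x, gradient g x⟫ + g x * laplacian f x := by
  have hfe : ∀ᶠ y in nhds x, DifferentiableAt ℝ f y :=
    (hf.eventually (by norm_num)).mono fun y hy => hy.differentiableAt (by norm_num)
  have hge : ∀ᶠ y in nhds x, DifferentiableAt ℝ g y :=
    (hg.eventually (by norm_num)).mono fun y hy => hy.differentiableAt (by norm_num)
  have key : fderiv ℝ (fun y => f y * g y) =ᶠ[nhds x]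
      fun y => f y • fderiv ℝ g y + g y • fderiv ℝ f y := by
    filter_upwards [hfe, hge] with y hy1 hy2
    exact fderiv_mul hy1 hy2
  have hfx : DifferentiableAt ℝ f x := hf.differentiableAt (by norm_num)
  have hgx : DifferentiableAt ℝ g x := hg.differentiableAt (by norm_num)
  have hf' : DifferentiableAt ℝ (fderiv ℝ f) x :=
    (hf.fderiv_right (m := 1) (by norm_num)).differentiableAt (by norm_num)
  have hg' : DifferentiableAt ℝ (fderiv ℝ g) x :=
    (hg.fderiv_right (m := 1) (by norm_num)).differentiableAt (by norm_num)
  have h1 : DifferentiableAt ℝ (fun y => f y • fderiv ℝ g y) x := hfx.smul hg'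
  have h2 : DifferentiableAt ℝ (fun y => g y • fderiv ℝ f y) x := hgx.smul hf'
  calc laplacian (fun y => f y * g y) x
      = ∑ i, fderiv ℝ (fderiv ℝ fun y => f y * g y) x (ee i) (ee i) := lap_eq _ _
    _ = ∑ i, fderiv ℝ (fun y => f y • fderiv ℝ g y + g y • fderiv ℝ f y) x (ee i) (ee i) := by
        rw [key.fderiv_eq]
    _ = ∑ i, ((f x * fderiv ℝ (fderiv ℝ g) x (ee i) (ee i)
          + fderiv ℝ f x (ee i) * fderiv ℝ g x (ee i))
        + (g x * fderiv ℝ (fderiv ℝ f) x (ee i) (ee i)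
          + fderiv ℝ g x (ee i) * fderiv ℝ f x (ee i))) := by
        refine Finset.sum_congr rfl fun i _ => ?_
        rw [fderiv_fun_add h1 h2, fderiv_fun_smul hfx hg', fderiv_fun_smul hgx hf']
        simp [ContinuousLinearMap.add_apply, ContinuousLinearMap.smul_apply,
          ContinuousLinearMap.smulRight_apply, smul_eq_mul]
    _ = f x * laplacian g x + 2 * ⟪gradient f x, gradient g x⟫ + g x * laplacian f x := by
        rw [Finset.sum_add_distrib, Finset.sum_add_distrib, Finset.sum_add_distrib,
          ← Finset.mul_sum, ← Finset.mul_sum, ← lap_eq, ← lap_eq, ← inner_grad_sum]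
        have : ∑ i, fderiv ℝ g x (ee i) * fderiv ℝ f x (ee i)
            = ∑ i, fderiv ℝ f x (ee i) * fderiv ℝ g x (ee i) :=
          Finset.sum_congr rfl fun i _ => mul_comm _ _
        rw [this, ← inner_grad_sum]
        ring

variable {u : EuclideanSpace ℝ (Fin n) → ℝ} {ε α : ℝ}

lemma grad_rpow (hu : ContDiff ℝ 4 u) (hv : ∀ y, 0 < u y + ε) (x : EuclideanSpace ℝ (Fin n)) :
    gradient (fun y => (u y + ε) ^ (-α)) x
      = (-α * (u x + ε) ^ (-α - 1)) • gradient u x := by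
  have hud : Differentiable ℝ u := hu.differentiable (by norm_num)
  have hF : HasFDerivAt (fun z => (u z + ε) ^ (-α))
      ((-α * (u x + ε) ^ (-α - 1)) • fderiv ℝ u x) x :=
    HasFDerivAt.rpow_const ((hud x).hasFDerivAt.add_const ε) (Or.inl (hv x).ne')
  unfold gradient
  rw [hF.fderiv]
  exact map_smul _ _ _

lemma lap_rpow (hu : ContDiff ℝ 4 u) (hv : ∀ y, 0 < u y + ε) (x : EuclideanSpace ℝ (Fin n)) :
    laplacian (fun y => (u y + ε) ^ (-α)) x
      = -α * (u x + ε) ^ (-α - 1) * laplacian u x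
        + α * (α + 1) * (u x + ε) ^ (-α - 2) * ‖gradient u x‖ ^ 2 := by
  have hud : Differentiable ℝ u := hu.differentiable (by norm_num)
  have hF : ∀ y, HasFDerivAt (fun z => (u z + ε) ^ (-α))
      ((-α * (u y + ε) ^ (-α - 1)) • fderiv ℝ u y) y := fun y =>
    HasFDerivAt.rpow_const ((hud y).hasFDerivAt.add_const ε) (Or.inl (hv y).ne')
  have hFf : fderiv ℝ (fun z => (u z + ε) ^ (-α))
      = fun y => (-α * (u y + ε) ^ (-α - 1)) • fderiv ℝ u y := fderiv_eq hF
  have hc : ∀ y, HasFDerivAt (fun z => -α * (u z + ε) ^ (-α - 1))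
      ((-α) • (((-α - 1) * (u y + ε) ^ (-α - 1 - 1)) • fderiv ℝ u y)) y := fun y =>
    HasFDerivAt.const_mul
      (HasFDerivAt.rpow_const ((hud y).hasFDerivAt.add_const ε) (Or.inl (hv y).ne')) (-α)
  have hu' : DifferentiableAt ℝ (fderiv ℝ u) x :=
    ((hu.fderiv_right (m := 3) (by norm_num)).differentiable (by norm_num)) x
  rw [lap_eq, hFf]
  have step : ∀ i : Fin n,
      fderiv ℝ (fun y => (-α * (u y + ε) ^ (-α - 1)) • fderiv ℝ u y) x (ee i) (ee i)
        = -α * (u x + ε) ^ (-α - 1) * fderiv ℝ (fderiv ℝ u) x (ee i) (ee i)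
          + (-α * ((-α - 1) * (u x + ε) ^ (-α - 1 - 1)))
            * (fderiv ℝ u x (ee i) * fderiv ℝ u x (ee i)) := by
    intro i
    rw [fderiv_fun_smul (hc x).differentiableAt hu']
    rw [(hc x).fderiv]
    simp only [ContinuousLinearMap.add_apply, ContinuousLinearMap.smul_apply,
      ContinuousLinearMap.smulRight_apply, smul_eq_mul]
    ring
  rw [Finset.sum_congr rfl fun i _ => step i, Finset.sum_add_distrib,
    ← Finset.mul_sum, ← Finset.mul_sum, ← lap_eq, ← norm_grad_sq]
  have : -α - 1 - 1 = -α - 2 := by ring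
  rw [this]
  ring

lemma contDiff_lap (hu : ContDiff ℝ 4 u) : ContDiff ℝ 2 (fun y => laplacian u y) := by
  unfold laplacian
  refine ContDiff.sum fun i _ => ?_
  have h2 : ContDiff ℝ 2 (iteratedFDeriv ℝ 2 u) := hu.iteratedFDeriv_right (by norm_num)
  exact (ContinuousMultilinearMap.apply ℝ (fun _ : Fin 2 => EuclideanSpace ℝ (Fin n)) ℝ
    ![EuclideanSpace.single i 1, EuclideanSpace.single i 1]).contDiff.comp h2

lemma contDiff_grad (hu : ContDiff ℝ 4 u) : ContDiff ℝ 2 (fun y => gradient u y) := by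
  have h3 : ContDiff ℝ 3 (fderiv ℝ u) := hu.fderiv_right (by norm_num)
  have := ((InnerProductSpace.toDual ℝ (EuclideanSpace ℝ (Fin n))).symm.contDiff).comp h3
  exact this.of_le (by norm_num)

lemma contDiff_gradsq (hu : ContDiff ℝ 4 u) :
    ContDiff ℝ 2 (fun y => ‖gradient u y‖ ^ 2) :=
  (contDiff_grad hu).norm_sq ℝ

lemma contDiff_s0 (hu : ContDiff ℝ 4 u) (hv : ∀ y, 0 < u y + ε) :
    ContDiff ℝ 2 (fun y => laplacian u y + α * ‖gradient u y‖ ^ 2 / (u y + ε)) :=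
  (contDiff_lap hu).add (((contDiff_const.mul (contDiff_gradsq hu)).div
    ((hu.of_le (by norm_num)).add contDiff_const) fun y => (hv y).ne'))

lemma contDiff_f (hu : ContDiff ℝ 4 u) (hv : ∀ y, 0 < u y + ε) :
    ContDiff ℝ 2 (fun y => (u y + ε) ^ (-α)) :=
  ContDiff.rpow_const_of_ne ((hu.of_le (by norm_num)).add contDiff_const) fun y => (hv y).ne'

lemma contDiff_uq (hu : ContDiff ℝ 4 u) (hupos : ∀ y, 0 < u y) (q : ℝ) :
    ContDiff ℝ 2 (fun y => u y ^ q) :=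
  ContDiff.rpow_const_of_ne (hu.of_le (by norm_num)) fun y => (hupos y).ne'


lemma main_step (p a ε α β : ℝ)
    (hε : 0 < ε) (hα : 0 < α) (hβ : 0 < β) (hpα : p + 1 > 2 * α)
    (u w : EuclideanSpace ℝ (Fin n) → ℝ) (hu : ContDiff ℝ 4 u)
    (hupos : ∀ y, 0 < u y)
    (x : EuclideanSpace ℝ (Fin n))
    (hsuper : laplacian u x ≤ 0)
    (hineq : laplacian w x
        - 2 * α * (u x + ε)⁻¹ * ⟪gradient u x, gradient w x⟫
        + α * w x * ((u x + ε) ^ 2)⁻¹ * ‖gradient u x‖ ^ 2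
        - (β * (p + 1) / 2) * ‖x‖ ^ (a / 2) * u x ^ ((p - 1) / 2) * w x ≥ 0)
    (hwx : 0 ≤ w x)
    (S : EuclideanSpace ℝ (Fin n) → ℝ) (hS : ContDiffAt ℝ 2 S x)
    (e1 : S x = w x) (e2 : gradient S x = gradient w x) (e3 : laplacian S x = laplacian w x) :
    0 ≤ laplacian (fun y => (u y + ε) ^ (-α) * S y) x := by
  have hv : ∀ y, 0 < u y + ε := fun y => by have := hupos y; linarith
  have hV : 0 < u x + ε := hv x
  have hfS : laplacian (fun y => (u y + ε) ^ (-α) * S y) x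
      = (u x + ε) ^ (-α) * laplacian S x
        + 2 * ⟪gradient (fun y => (u y + ε) ^ (-α)) x, gradient S x⟫
        + S x * laplacian (fun y => (u y + ε) ^ (-α)) x :=
    laplacian_mul ((contDiff_f hu hv).contDiffAt) hS
  rw [hfS, grad_rpow hu hv, lap_rpow hu hv, real_inner_smul_left, e1, e2, e3]
  set V := u x + ε with hVdef
  have hA : (0:ℝ) < V ^ (-α) := Real.rpow_pos_of_pos hV _
  have hB : V ^ (-α - 1) = V ^ (-α) * V⁻¹ := by
    rw [show -α - 1 = -α + (-1) by ring, Real.rpow_add hV, Real.rpow_neg_one]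
  have hC : V ^ (-α - 2) = V ^ (-α) * (V ^ 2)⁻¹ := by
    rw [show -α - 2 = -α + (-2) by ring, Real.rpow_add hV]
    congr 1
    rw [show (-2:ℝ) = -((2:ℕ):ℝ) by norm_num, Real.rpow_neg hV.le, Real.rpow_natCast]
  rw [hB, hC]
  set L := laplacian w x
  set I : ℝ := ⟪gradient u x, gradient w x⟫
  set N := ‖gradient u x‖ ^ 2
  set W := w x
  set D := laplacian u x
  set A := V ^ (-α) with hAdef
  set R := ‖x‖ ^ (a / 2) * u x ^ ((p - 1) / 2) with hRdef
  have hR : 0 ≤ R := mul_nonneg (Real.rpow_nonneg (norm_nonneg _) _)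
    (Real.rpow_nonneg (hupos x).le _)
  have hNn : 0 ≤ N := sq_nonneg _
  have hineq' : 0 ≤ L - 2 * α * V⁻¹ * I + α * W * (V ^ 2)⁻¹ * N - β * (p + 1) / 2 * R * W := by
    have := hineq
    rw [hRdef]
    linarith [hineq]
  have key : A * L + 2 * (-α * (A * V⁻¹) * I)
      + W * (-α * (A * V⁻¹) * D + α * (α + 1) * (A * (V ^ 2)⁻¹) * N)
      = A * (L - 2 * α * V⁻¹ * I + α * W * (V ^ 2)⁻¹ * N - β * (p + 1) / 2 * R * W)
        + A * (β * (p + 1) / 2 * R * W)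
        + A * (α ^ 2 * W * (V ^ 2)⁻¹ * N)
        + A * (α * W * V⁻¹ * (-D)) := by ring
  rw [key]
  have h1 : 0 ≤ A * (L - 2 * α * V⁻¹ * I + α * W * (V ^ 2)⁻¹ * N - β * (p + 1) / 2 * R * W) :=
    mul_nonneg hA.le hineq'
  have h2 : 0 ≤ A * (β * (p + 1) / 2 * R * W) := by
    have : (0:ℝ) ≤ β * (p + 1) / 2 := by nlinarith
    exact mul_nonneg hA.le (mul_nonneg (mul_nonneg this hR) hwx)
  have h3 : 0 ≤ A * (α ^ 2 * W * (V ^ 2)⁻¹ * N) := by positivity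
  have h4 : 0 ≤ A * (α * W * V⁻¹ * (-D)) := by
    have : 0 ≤ -D := by linarith
    have := mul_nonneg (mul_nonneg (mul_nonneg hα.le hwx) (inv_nonneg.mpr (by positivity : (0:ℝ) ≤ V))) this
    exact mul_nonneg hA.le this
  linarith


lemma norm_rpow_eq (y : EuclideanSpace ℝ (Fin n)) (a : ℝ) :
    ‖y‖ ^ (a / 2) = ((‖y‖ ^ 2 : ℝ)) ^ (a / 4) := by
  rw [← Real.rpow_natCast ‖y‖ 2, ← Real.rpow_mul (norm_nonneg y)]
  congr 1
  push_cast
  ring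

set_option maxHeartbeats 1000000 in
set_option synthInstance.maxHeartbeats 400000 in
lemma keyB {γ : ℝ} (hγ : 1 < γ) (h : EuclideanSpace ℝ (Fin n) → ℝ) (hh : ContDiff ℝ 2 h) :
    Differentiable ℝ (fun y => h y * ((‖y‖ ^ 2 : ℝ)) ^ γ) ∧
    fderiv ℝ (fun y => h y * ((‖y‖ ^ 2 : ℝ)) ^ γ) 0 = 0 ∧
    HasFDerivAt (fderiv ℝ (fun y => h y * ((‖y‖ ^ 2 : ℝ)) ^ γ))
      (0 : EuclideanSpace ℝ (Fin n) →L[ℝ] (EuclideanSpace ℝ (Fin n) →L[ℝ] ℝ)) 0 := by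
  have hhd : Differentiable ℝ h := hh.differentiable (by norm_num)
  set M : EuclideanSpace ℝ (Fin n) → (EuclideanSpace ℝ (Fin n)) →L[ℝ] ℝ :=
    fun y => ((γ * ((‖y‖ ^ 2 : ℝ)) ^ (γ - 1)) * 2) • innerSL ℝ y with hM
  have hm : ∀ y, HasFDerivAt (fun z => ((‖z‖ ^ 2 : ℝ)) ^ γ) (M y) y := fun y => by
    have h0 := HasFDerivAt.rpow_const (p := γ) (hasStrictFDerivAt_norm_sq y).hasFDerivAt
      (Or.inr hγ.le)
    have : (γ * (‖y‖ ^ 2 : ℝ) ^ (γ - 1)) • ((2:ℕ) • innerSL ℝ y) = M y := by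
      rw [← Nat.cast_smul_eq_nsmul ℝ (2:ℕ) (innerSL ℝ y), smul_smul, hM]
      norm_num
    rwa [this] at h0
  have hP : ∀ y, HasFDerivAt (fun z => h z * ((‖z‖ ^ 2 : ℝ)) ^ γ)
      (h y • M y + ((‖y‖ ^ 2 : ℝ)) ^ γ • fderiv ℝ h y) y := fun y =>
    HasFDerivAt.mul ((hhd y).hasFDerivAt) (hm y)
  have hPd : Differentiable ℝ (fun y => h y * ((‖y‖ ^ 2 : ℝ)) ^ γ) :=
    fun y => (hP y).differentiableAt
  have hΦ : fderiv ℝ (fun y => h y * ((‖y‖ ^ 2 : ℝ)) ^ γ)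
      = fun y => h y • M y + ((‖y‖ ^ 2 : ℝ)) ^ γ • fderiv ℝ h y := fderiv_eq hP
  have hγ0 : (0:ℝ) < 2 * γ - 2 := by linarith
  have hzero : M 0 = 0 := by
    rw [hM]
    show ((γ * ((‖(0 : EuclideanSpace ℝ (Fin n))‖ ^ 2 : ℝ)) ^ (γ - 1)) * 2)
      • innerSL ℝ (0 : EuclideanSpace ℝ (Fin n)) = 0
    rw [map_zero, smul_zero]
  have hm00 : ((‖(0 : EuclideanSpace ℝ (Fin n))‖ ^ 2 : ℝ)) ^ γ = 0 := by
    rw [norm_zero, show ((0:ℝ) ^ 2 : ℝ) = 0 by norm_num,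
      Real.zero_rpow (by linarith : γ ≠ 0)]
  have hΦ0 : fderiv ℝ (fun y => h y * ((‖y‖ ^ 2 : ℝ)) ^ γ) 0 = 0 := by
    rw [hΦ]
    show h 0 • M 0 + ((‖(0 : EuclideanSpace ℝ (Fin n))‖ ^ 2 : ℝ)) ^ γ • fderiv ℝ h 0 = 0
    rw [hzero, hm00, smul_zero, zero_smul, add_zero]
  refine ⟨hPd, hΦ0, ?_⟩
  rw [hasFDerivAt_iff_isLittleO_nhds_zero]
  have hre : (fun y => fderiv ℝ (fun z => h z * ((‖z‖ ^ 2 : ℝ)) ^ γ) (0 + y)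
      - fderiv ℝ (fun z => h z * ((‖z‖ ^ 2 : ℝ)) ^ γ) 0
      - (0 : EuclideanSpace ℝ (Fin n) →L[ℝ] (EuclideanSpace ℝ (Fin n) →L[ℝ] ℝ)) y)
      = fun y => fderiv ℝ (fun z => h z * ((‖z‖ ^ 2 : ℝ)) ^ γ) y := by
    funext y
    rw [ContinuousLinearMap.zero_apply, sub_zero, hΦ0, sub_zero, zero_add]
  rw [hre, Asymptotics.isLittleO_iff]
  intro c hc
  set K₁ := ‖h 0‖ + 1 with hK1
  set K₂ := ‖fderiv ℝ h 0‖ + 1 with hK2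
  have hK1pos : 0 < K₁ := by positivity
  have hK2pos : 0 < K₂ := by positivity
  have hγpos : (0:ℝ) < γ := by linarith
  have hKpos : 0 < 2 * γ * K₁ + K₂ := by positivity
  have ev1 : ∀ᶠ y in nhds (0 : EuclideanSpace ℝ (Fin n)), ‖h y‖ < K₁ :=
    Filter.Tendsto.eventually_lt_const (lt_add_one _) ((hh.continuous.tendsto 0).norm)
  have ev2 : ∀ᶠ y in nhds (0 : EuclideanSpace ℝ (Fin n)), ‖fderiv ℝ h y‖ < K₂ :=
    Filter.Tendsto.eventually_lt_const (lt_add_one _)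
      (((hh.fderiv_right (m := 1) (by norm_num)).continuous.tendsto 0).norm)
  have hnormt : Filter.Tendsto (fun y : EuclideanSpace ℝ (Fin n) => ‖y‖) (nhds 0) (nhds 0) := by
    simpa using continuous_norm.tendsto (0 : EuclideanSpace ℝ (Fin n))
  have ev3 : ∀ᶠ y in nhds (0 : EuclideanSpace ℝ (Fin n)), ‖y‖ ≤ 1 :=
    (hnormt.eventually_lt_const one_pos).mono fun y hy => hy.le
  have ev4 : ∀ᶠ y in nhds (0 : EuclideanSpace ℝ (Fin n)),
      (2 * γ * K₁ + K₂) * ‖y‖ ^ (2 * γ - 2) < c := by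
    have hcont : ContinuousAt (fun t : ℝ => t ^ (2 * γ - 2)) 0 :=
      Real.continuousAt_rpow_const 0 _ (Or.inr hγ0.le)
    have t1 := (hcont.tendsto.comp hnormt)
    rw [Function.comp_def] at t1
    rw [Real.zero_rpow hγ0.ne'] at t1
    have t2 := t1.const_mul (2 * γ * K₁ + K₂)
    rw [mul_zero] at t2
    exact t2.eventually_lt_const hc
  filter_upwards [ev1, ev2, ev3, ev4] with y h1 h2 h3 h4
  rcases eq_or_ne y 0 with rfl | hy0
  · rw [hΦ0]
    simp
  have hny : 0 < ‖y‖ := norm_pos_iff.mpr hy0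
  have hrw : ∀ e : ℝ, ((‖y‖ ^ 2 : ℝ)) ^ e = ‖y‖ ^ (2 * e) := fun e => by
    rw [← Real.rpow_natCast ‖y‖ 2, ← Real.rpow_mul (norm_nonneg y)]
    norm_num
  have hMn : ‖M y‖ ≤ 2 * γ * ‖y‖ ^ (2 * γ - 1) := by
    rw [hM]
    have e0 : ‖(((γ * ((‖y‖ ^ 2 : ℝ)) ^ (γ - 1)) * 2) • innerSL ℝ y :
        EuclideanSpace ℝ (Fin n) →L[ℝ] ℝ)‖
        = |(γ * ((‖y‖ ^ 2 : ℝ)) ^ (γ - 1)) * 2| * ‖y‖ := by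
      rw [norm_smul ((γ * ((‖y‖ ^ 2 : ℝ)) ^ (γ - 1)) * 2) (innerSL ℝ y),
        innerSL_apply_norm, Real.norm_eq_abs]
    rw [e0, abs_of_nonneg (by positivity), hrw]
    have e1 : 2 * (γ - 1) = 2 * γ - 2 := by ring
    rw [e1]
    have e2 : γ * ‖y‖ ^ (2 * γ - 2) * 2 * ‖y‖ = 2 * γ * (‖y‖ ^ (2 * γ - 2) * ‖y‖ ^ (1:ℝ)) := by
      rw [Real.rpow_one]; ring
    rw [e2, ← Real.rpow_add hny]
    have e3 : 2 * γ - 2 + 1 = 2 * γ - 1 := by ring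
    rw [e3]
  have step : ‖fderiv ℝ (fun z => h z * ((‖z‖ ^ 2 : ℝ)) ^ γ) y‖
      ≤ (2 * γ * K₁ + K₂) * ‖y‖ ^ (2 * γ - 1) := by
    rw [hΦ]
    have e1 : ‖((‖y‖ ^ 2 : ℝ)) ^ γ‖ = ‖y‖ ^ (2 * γ) := by
      rw [Real.norm_eq_abs, abs_of_nonneg (Real.rpow_nonneg (by positivity) _), hrw]
    have e5 : ‖y‖ ^ (2 * γ) ≤ ‖y‖ ^ (2 * γ - 1) :=
      Real.rpow_le_rpow_of_exponent_ge hny h3 (by linarith)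
    have hb : ‖h y • M y + ((‖y‖ ^ 2 : ℝ)) ^ γ • fderiv ℝ h y‖
        ≤ ‖h y‖ * ‖M y‖ + ‖((‖y‖ ^ 2 : ℝ)) ^ γ‖ * ‖fderiv ℝ h y‖ := by
      refine le_trans (norm_add_le _ _) (le_of_eq ?_)
      rw [norm_smul (h y) (M y), norm_smul (((‖y‖ ^ 2 : ℝ)) ^ γ) (fderiv ℝ h y)]
    refine le_trans hb ?_
    rw [e1]
    have t1 : ‖h y‖ * ‖M y‖ ≤ K₁ * (2 * γ * ‖y‖ ^ (2 * γ - 1)) :=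
      mul_le_mul h1.le hMn (norm_nonneg _) hK1pos.le
    have t2 : ‖y‖ ^ (2 * γ) * ‖fderiv ℝ h y‖ ≤ ‖y‖ ^ (2 * γ - 1) * K₂ :=
      mul_le_mul e5 h2.le (norm_nonneg _) (Real.rpow_nonneg hny.le _)
    nlinarith [Real.rpow_nonneg hny.le (2 * γ - 1)]
  have final : (2 * γ * K₁ + K₂) * ‖y‖ ^ (2 * γ - 1) ≤ c * ‖y‖ := by
    have e2 : ‖y‖ ^ (2 * γ - 1) = ‖y‖ ^ (2 * γ - 2) * ‖y‖ := by
      rw [show (2 * γ - 1) = (2 * γ - 2) + 1 by ring, Real.rpow_add hny, Real.rpow_one]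
    rw [e2, ← mul_assoc]
    exact mul_le_mul_of_nonneg_right h4.le hny.le
  calc ‖fderiv ℝ (fun z => h z * ((‖z‖ ^ 2 : ℝ)) ^ γ) y‖
      ≤ (2 * γ * K₁ + K₂) * ‖y‖ ^ (2 * γ - 1) := step
    _ ≤ c * ‖y‖ := final


set_option maxHeartbeats 1000000 in
set_option synthInstance.maxHeartbeats 400000 in
lemma decomp (g P : EuclideanSpace ℝ (Fin n) → ℝ) (β : ℝ) (hg : ContDiff ℝ 2 g)
    (hPd : Differentiable ℝ P)
    (hP00 : P 0 = 0) (hP0 : fderiv ℝ P 0 = 0)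
    (hP2 : HasFDerivAt (fderiv ℝ P)
      (0 : EuclideanSpace ℝ (Fin n) →L[ℝ] (EuclideanSpace ℝ (Fin n) →L[ℝ] ℝ)) 0) :
    (fun y => g y + β * P y) 0 = g 0 ∧
    gradient (fun y => g y + β * P y) 0 = gradient g 0 ∧
    laplacian (fun y => g y + β * P y) 0 = laplacian g 0 := by
  have hgd : Differentiable ℝ g := hg.differentiable (by norm_num)
  have hf1 : fderiv ℝ (fun z => g z + β * P z)
      = fun y => fderiv ℝ g y + β • fderiv ℝ P y := by
    funext y
    rw [fderiv_fun_add (hgd y) ((hPd y).const_mul β), fderiv_const_mul (hPd y)]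
  refine ⟨?_, ?_, ?_⟩
  · show g 0 + β * P 0 = g 0
    rw [hP00, mul_zero, add_zero]
  · unfold gradient
    rw [hf1]
    show (InnerProductSpace.toDual ℝ _).symm (fderiv ℝ g 0 + β • fderiv ℝ P 0) = _
    rw [hP0, smul_zero, add_zero]
  · rw [lap_eq, lap_eq]
    refine Finset.sum_congr rfl fun i _ => ?_
    rw [hf1]
    have hgd2 : HasFDerivAt (fderiv ℝ g) (fderiv ℝ (fderiv ℝ g) 0) 0 :=
      (((hg.fderiv_right (m := 1) (by norm_num)).differentiable (by norm_num)) 0).hasFDerivAt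
    have hsum : HasFDerivAt (fun y => fderiv ℝ g y + β • fderiv ℝ P y)
        (fderiv ℝ (fderiv ℝ g) 0 + β • (0 : EuclideanSpace ℝ (Fin n) →L[ℝ]
          (EuclideanSpace ℝ (Fin n) →L[ℝ] ℝ))) 0 :=
      hgd2.add (hP2.const_smul β)
    rw [hsum.fderiv]
    simp only [ContinuousLinearMap.add_apply, ContinuousLinearMap.smul_apply,
      ContinuousLinearMap.zero_apply, smul_zero, smul_eq_mul, mul_zero, add_zero]


set_option maxHeartbeats 2000000 in
set_option synthInstance.maxHeartbeats 400000 in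
lemma caseC {n : ℕ} (hn : 0 < n) {γ β : ℝ} (hγ0 : 0 < γ) (hγ1 : γ < 1) (hβ : 0 < β)
    (G h : EuclideanSpace ℝ (Fin n) → ℝ) (hG : ContDiff ℝ 2 G) (hh : ContDiff ℝ 2 h)
    (hh0 : 0 < h 0) :
    laplacian (fun y => G y + β * (h y * ((‖y‖ ^ 2 : ℝ)) ^ γ)) 0 = 0 := by
  set e0 : EuclideanSpace ℝ (Fin n) := EuclideanSpace.single ⟨0, hn⟩ 1 with he0def
  have he0 : ‖e0‖ = 1 := by rw [he0def, EuclideanSpace.norm_single]; norm_num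
  have he0i : (⟪e0, e0⟫ : ℝ) = 1 := by
    rw [real_inner_self_eq_norm_sq, he0]; norm_num
  suffices hnd : ¬ DifferentiableAt ℝ
      (fderiv ℝ (fun y => G y + β * (h y * ((‖y‖ ^ 2 : ℝ)) ^ γ))) 0 by
    rw [lap_eq, fderiv_zero_of_not_differentiableAt hnd]
    simp
  intro hd
  have hGd : Differentiable ℝ G := hG.differentiable (by norm_num)
  have hhd : Differentiable ℝ h := hh.differentiable (by norm_num)
  -- derivative formula away from 0
  have hm : ∀ y : EuclideanSpace ℝ (Fin n), y ≠ 0 →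
      HasFDerivAt (fun z => ((‖z‖ ^ 2 : ℝ)) ^ γ)
        (((γ * ((‖y‖ ^ 2 : ℝ)) ^ (γ - 1)) * 2) • innerSL ℝ y) y := by
    intro y hy
    have h0 := HasFDerivAt.rpow_const (p := γ) (hasStrictFDerivAt_norm_sq y).hasFDerivAt
      (Or.inl (pow_ne_zero 2 (norm_ne_zero_iff.mpr hy)))
    have : (γ * (‖y‖ ^ 2 : ℝ) ^ (γ - 1)) • ((2:ℕ) • innerSL ℝ y)
        = ((γ * ((‖y‖ ^ 2 : ℝ)) ^ (γ - 1)) * 2) • innerSL ℝ y := by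
      rw [← Nat.cast_smul_eq_nsmul ℝ (2:ℕ) (innerSL ℝ y), smul_smul]
      norm_num
    rwa [this] at h0
  have hP : ∀ y : EuclideanSpace ℝ (Fin n), y ≠ 0 →
      HasFDerivAt (fun z => h z * ((‖z‖ ^ 2 : ℝ)) ^ γ)
        (h y • (((γ * ((‖y‖ ^ 2 : ℝ)) ^ (γ - 1)) * 2) • innerSL ℝ y)
          + ((‖y‖ ^ 2 : ℝ)) ^ γ • fderiv ℝ h y) y := fun y hy =>
    HasFDerivAt.mul ((hhd y).hasFDerivAt) (hm y hy)
  have hgy : ∀ y : EuclideanSpace ℝ (Fin n), y ≠ 0 →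
      fderiv ℝ (fun z => G z + β * (h z * ((‖z‖ ^ 2 : ℝ)) ^ γ)) y
        = fderiv ℝ G y + β • (h y • (((γ * ((‖y‖ ^ 2 : ℝ)) ^ (γ - 1)) * 2) • innerSL ℝ y)
            + ((‖y‖ ^ 2 : ℝ)) ^ γ • fderiv ℝ h y) := by
    intro y hy
    rw [fderiv_fun_add (hGd y) ((hP y hy).differentiableAt.const_mul β),
      fderiv_const_mul (hP y hy).differentiableAt, (hP y hy).fderiv]
  -- big-O constants
  have hbig := hd.hasFDerivAt.isBigO_sub
  rw [Asymptotics.isBigO_iff] at hbig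
  obtain ⟨C, hC⟩ := hbig
  have hbig1 := (((hG.fderiv_right (m := 1) (by norm_num)).differentiable
    (by norm_num) 0).hasFDerivAt).isBigO_sub
  rw [Asymptotics.isBigO_iff] at hbig1
  obtain ⟨C₁, hC1⟩ := hbig1
  have hbig2 := (((hh.fderiv_right (m := 1) (by norm_num)).differentiable
    (by norm_num) 0).hasFDerivAt).isBigO_sub
  rw [Asymptotics.isBigO_iff] at hbig2
  obtain ⟨C₂, hC2⟩ := hbig2
  set F := fderiv ℝ (fun z => G z + β * (h z * ((‖z‖ ^ 2 : ℝ)) ^ γ)) with hF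
  set K := 2 * |C| + 2 * |C₁| + 2 * β * |C₂| with hK
  set κ := 2 * β * γ * h 0 with hκ
  have hκpos : 0 < κ := by rw [hκ]; positivity
  -- pull back to the ray t • e0
  have hcont1 : Filter.Tendsto (fun t : ℝ => t • e0) (nhdsWithin 0 (Set.Ioi 0)) (nhds 0) := by
    have : Filter.Tendsto (fun t : ℝ => t • e0) (nhds 0) (nhds ((0:ℝ) • e0)) :=
      (continuous_id.smul continuous_const).tendsto 0
    rw [zero_smul] at this
    exact this.mono_left nhdsWithin_le_nhds
  have hcont2 : Filter.Tendsto (fun t : ℝ => (-t) • e0) (nhdsWithin 0 (Set.Ioi 0)) (nhds 0) := by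
    have : Filter.Tendsto (fun t : ℝ => (-t) • e0) (nhds 0) (nhds ((-(0:ℝ)) • e0)) :=
      ((continuous_neg.smul continuous_const)).tendsto 0
    rw [neg_zero, zero_smul] at this
    exact this.mono_left nhdsWithin_le_nhds
  have evt : ∀ᶠ t : ℝ in nhdsWithin 0 (Set.Ioi 0), 0 < t := eventually_mem_nhdsWithin
  have evt1 : ∀ᶠ t : ℝ in nhdsWithin 0 (Set.Ioi 0), t < 1 :=
    ((Filter.tendsto_id (α := ℝ)).mono_left nhdsWithin_le_nhds).eventually_lt_const one_pos
  have evh1 : ∀ᶠ t : ℝ in nhdsWithin 0 (Set.Ioi 0), h 0 / 2 < h (t • e0) :=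
    Filter.Tendsto.eventually_const_lt (by linarith) ((hh.continuous.tendsto 0).comp hcont1)
  have evh2 : ∀ᶠ t : ℝ in nhdsWithin 0 (Set.Ioi 0), h 0 / 2 < h ((-t) • e0) :=
    Filter.Tendsto.eventually_const_lt (by linarith) ((hh.continuous.tendsto 0).comp hcont2)
  have evsmall : ∀ᶠ t : ℝ in nhdsWithin 0 (Set.Ioi 0), K * t ^ (2 - 2 * γ) < κ := by
    have hcontr : ContinuousAt (fun s : ℝ => s ^ (2 - 2 * γ)) 0 :=
      Real.continuousAt_rpow_const 0 _ (Or.inr (by linarith))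
    have t0 : Filter.Tendsto (fun s : ℝ => s ^ (2 - 2 * γ)) (nhdsWithin 0 (Set.Ioi 0))
        (nhds ((0:ℝ) ^ (2 - 2 * γ))) :=
      (hcontr.tendsto).mono_left nhdsWithin_le_nhds
    rw [Real.zero_rpow (by intro hcontra; linarith [hcontra] : (2 - 2*γ) ≠ 0)] at t0
    have t2 := t0.const_mul K
    rw [mul_zero] at t2
    exact t2.eventually_lt_const hκpos
  have evC1 := hcont1.eventually hC
  have evC2 := hcont2.eventually hC
  have evG1 := hcont1.eventually hC1
  have evG2 := hcont2.eventually hC1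
  have evh'1 := hcont1.eventually hC2
  have evh'2 := hcont2.eventually hC2
  have hcontra : ∀ᶠ t : ℝ in nhdsWithin 0 (Set.Ioi 0), False := by
    filter_upwards [evt, evt1, evh1, evh2, evsmall, evC1, evC2, evG1, evG2, evh'1, evh'2]
      with t ht ht1 hh1 hh2 hsmall hc1 hc2 hg1 hg2 hd1 hd2
    set yp : EuclideanSpace ℝ (Fin n) := t • e0 with hyp
    set ym : EuclideanSpace ℝ (Fin n) := (-t) • e0 with hym
    have hny : ‖yp‖ = t := by
      rw [hyp, norm_smul, he0, Real.norm_eq_abs, abs_of_pos ht, mul_one]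
    have hny' : ‖ym‖ = t := by
      rw [hym, norm_smul, he0, mul_one, Real.norm_eq_abs, abs_neg, abs_of_pos ht]
    have hyp0 : yp ≠ 0 := by
      intro hcon; rw [hcon, norm_zero] at hny; linarith
    have hym0 : ym ≠ 0 := by
      intro hcon; rw [hcon, norm_zero] at hny'; linarith
    have hq : (‖yp‖ ^ 2 : ℝ) = t ^ 2 := by rw [hny]
    have hq' : (‖ym‖ ^ 2 : ℝ) = t ^ 2 := by rw [hny']
    have hip : (⟪yp, e0⟫ : ℝ) = t := by rw [hyp, real_inner_smul_left, he0i, mul_one]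
    have him : (⟪ym, e0⟫ : ℝ) = -t := by rw [hym, real_inner_smul_left, he0i, mul_one]
    have hFp : F yp e0 = fderiv ℝ G yp e0
        + β * (h yp * (γ * ((t ^ 2 : ℝ)) ^ (γ - 1) * 2 * t)
          + ((t ^ 2 : ℝ)) ^ γ * fderiv ℝ h yp e0) := by
      rw [hgy yp hyp0, hq]
      simp only [ContinuousLinearMap.add_apply, ContinuousLinearMap.smul_apply, smul_eq_mul,
        innerSL_apply_apply]
      rw [hip]
    have hFm : F ym e0 = fderiv ℝ G ym e0
        + β * (h ym * (γ * ((t ^ 2 : ℝ)) ^ (γ - 1) * 2 * (-t))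
          + ((t ^ 2 : ℝ)) ^ γ * fderiv ℝ h ym e0) := by
      rw [hgy ym hym0, hq']
      simp only [ContinuousLinearMap.add_apply, ContinuousLinearMap.smul_apply, smul_eq_mul,
        innerSL_apply_apply]
      rw [him]
    -- generic two-sided bound
    have genbound : ∀ (T : EuclideanSpace ℝ (Fin n) → (EuclideanSpace ℝ (Fin n) →L[ℝ] ℝ))
        (c : ℝ), ‖T yp - T 0‖ ≤ c * ‖yp - 0‖ → ‖T ym - T 0‖ ≤ c * ‖ym - 0‖ →
        |T yp e0 - T ym e0| ≤ 2 * |c| * t := by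
      intro T c hb1 hb2
      have l1 : |T yp e0 - T ym e0| = ‖(T yp - T ym) e0‖ := by
        rw [ContinuousLinearMap.sub_apply, Real.norm_eq_abs]
      have l2 : ‖(T yp - T ym) e0‖ ≤ ‖T yp - T ym‖ := by
        have := (T yp - T ym).le_opNorm e0
        rwa [he0, mul_one] at this
      have l3 : ‖T yp - T ym‖ ≤ ‖T yp - T 0‖ + ‖T ym - T 0‖ := by
        have := norm_sub_le (T yp - T 0) (T ym - T 0)
        simpa using this
      have l4 : ‖T yp - T 0‖ ≤ |c| * t := by
        refine le_trans hb1 ?_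
        rw [sub_zero, hny]
        exact mul_le_mul_of_nonneg_right (le_abs_self c) ht.le
      have l5 : ‖T ym - T 0‖ ≤ |c| * t := by
        refine le_trans hb2 ?_
        rw [sub_zero, hny']
        exact mul_le_mul_of_nonneg_right (le_abs_self c) ht.le
      rw [l1]
      calc ‖(T yp - T ym) e0‖ ≤ ‖T yp - T ym‖ := l2
        _ ≤ ‖T yp - T 0‖ + ‖T ym - T 0‖ := l3
        _ ≤ |c| * t + |c| * t := add_le_add l4 l5
        _ = 2 * |c| * t := by ring
    have bF : |F yp e0 - F ym e0| ≤ 2 * |C| * t := by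
      refine genbound F C ?_ ?_
      · simpa using hc1
      · simpa using hc2
    have bG : |fderiv ℝ G yp e0 - fderiv ℝ G ym e0| ≤ 2 * |C₁| * t := by
      refine genbound (fderiv ℝ G) C₁ ?_ ?_
      · simpa using hg1
      · simpa using hg2
    have bh : |fderiv ℝ h yp e0 - fderiv ℝ h ym e0| ≤ 2 * |C₂| * t := by
      refine genbound (fderiv ℝ h) C₂ ?_ ?_
      · simpa using hd1
      · simpa using hd2
    have hdiff : β * (γ * ((t ^ 2 : ℝ)) ^ (γ - 1) * 2 * t) * (h yp + h ym)
        = (F yp e0 - F ym e0) - (fderiv ℝ G yp e0 - fderiv ℝ G ym e0)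
          - β * ((t ^ 2 : ℝ)) ^ γ * (fderiv ℝ h yp e0 - fderiv ℝ h ym e0) := by
      rw [hFp, hFm]
      ring
    have hsumh : h 0 ≤ h yp + h ym := by linarith
    have hqpos : (0:ℝ) < ((t ^ 2 : ℝ)) ^ (γ - 1) := Real.rpow_pos_of_pos (by positivity) _
    have hqγ : ((t ^ 2 : ℝ)) ^ γ ≤ 1 := by
      refine Real.rpow_le_one (by positivity) ?_ hγ0.le
      nlinarith
    have hqγ0 : (0:ℝ) ≤ ((t ^ 2 : ℝ)) ^ γ := Real.rpow_nonneg (by positivity) _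
    have key1 : κ * (((t ^ 2 : ℝ)) ^ (γ - 1) * t) ≤ K * t := by
      have lhs_eq : κ * (((t ^ 2 : ℝ)) ^ (γ - 1) * t)
          = β * (γ * ((t ^ 2 : ℝ)) ^ (γ - 1) * 2 * t) * h 0 := by
        rw [hκ]; ring
      rw [lhs_eq]
      have step1 : β * (γ * ((t ^ 2 : ℝ)) ^ (γ - 1) * 2 * t) * h 0
          ≤ β * (γ * ((t ^ 2 : ℝ)) ^ (γ - 1) * 2 * t) * (h yp + h ym) := by
        refine mul_le_mul_of_nonneg_left hsumh ?_
        positivity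
      refine le_trans step1 ?_
      rw [hdiff]
      have babs : (F yp e0 - F ym e0) - (fderiv ℝ G yp e0 - fderiv ℝ G ym e0)
          - β * ((t ^ 2 : ℝ)) ^ γ * (fderiv ℝ h yp e0 - fderiv ℝ h ym e0)
          ≤ 2 * |C| * t + 2 * |C₁| * t + β * ((t ^ 2 : ℝ)) ^ γ * (2 * |C₂| * t) := by
        have a1 : F yp e0 - F ym e0 ≤ 2 * |C| * t := le_of_abs_le bF
        have a2 : -(2 * |C₁| * t) ≤ fderiv ℝ G yp e0 - fderiv ℝ G ym e0 := neg_le_of_abs_le bG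
        have a3 : |β * ((t ^ 2 : ℝ)) ^ γ * (fderiv ℝ h yp e0 - fderiv ℝ h ym e0)|
            ≤ β * ((t ^ 2 : ℝ)) ^ γ * (2 * |C₂| * t) := by
          rw [abs_mul, abs_of_nonneg (by positivity : (0:ℝ) ≤ β * ((t ^ 2 : ℝ)) ^ γ)]
          exact mul_le_mul_of_nonneg_left bh (by positivity)
        have a3' := neg_le_of_abs_le a3
        linarith
      refine le_trans babs ?_
      have c3 : β * ((t ^ 2 : ℝ)) ^ γ * (2 * |C₂| * t) ≤ 2 * β * |C₂| * t := by
        have : β * ((t ^ 2 : ℝ)) ^ γ * (2 * |C₂| * t) = (2 * β * |C₂| * t) * ((t ^ 2 : ℝ)) ^ γ := by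
          ring
        rw [this]
        calc (2 * β * |C₂| * t) * ((t ^ 2 : ℝ)) ^ γ ≤ (2 * β * |C₂| * t) * 1 :=
              mul_le_mul_of_nonneg_left hqγ (by positivity)
          _ = 2 * β * |C₂| * t := mul_one _
      rw [hK]
      linarith
    -- convert to contradiction with evsmall
    have hts : ((t ^ 2 : ℝ)) ^ (γ - 1) * t * t ^ (2 - 2 * γ) = t := by
      have e1 : ((t ^ 2 : ℝ)) ^ (γ - 1) = t ^ (2 * γ - 2) := by
        rw [← Real.rpow_natCast t 2, ← Real.rpow_mul ht.le]
        congr 1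
        push_cast
        ring
      rw [e1]
      have re : t ^ (2 * γ - 2) * t * t ^ (2 - 2 * γ)
          = t ^ (2 * γ - 2) * t ^ (2 - 2 * γ) * t := by ring
      rw [re, ← Real.rpow_add ht, show (2 * γ - 2) + (2 - 2 * γ) = 0 by ring,
        Real.rpow_zero, one_mul]
    have key2 : κ * t ≤ K * t ^ (2 - 2 * γ) * t := by
      have := mul_le_mul_of_nonneg_right key1 (Real.rpow_nonneg ht.le (2 - 2 * γ))
      calc κ * t = κ * (((t ^ 2 : ℝ)) ^ (γ - 1) * t * t ^ (2 - 2 * γ)) := by rw [hts]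
        _ = κ * (((t ^ 2 : ℝ)) ^ (γ - 1) * t) * t ^ (2 - 2 * γ) := by ring
        _ ≤ K * t * t ^ (2 - 2 * γ) := this
        _ = K * t ^ (2 - 2 * γ) * t := by ring
    have key3 : κ ≤ K * t ^ (2 - 2 * γ) := le_of_mul_le_mul_right key2 ht
    linarith
  exact hcontra.exists.elim fun _ f => f

end SubhAux


open SubhAux in
set_option maxHeartbeats 1000000 in
set_option synthInstance.maxHeartbeats 400000 in
/-- Maximum-principle step: if u > 0 is superharmonic, p + 1 > 2α, and
w = Δu + α|∇u|²/(u+ε) + β|x|^{a/2} u^{(p+1)/2} satisfies the stated differential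
inequality, then w̃ = (u+ε)^{-α} w is subharmonic on the set {w ≥ 0}. -/
theorem subharmonic_on_nonneg_set (n : ℕ) (p a ε α β : ℝ)
    (hε : 0 < ε) (hα : 0 < α) (hβ : 0 < β) (ha : 0 ≤ a) (hpα : p + 1 > 2 * α)
    (u w : EuclideanSpace ℝ (Fin n) → ℝ) (hu : ContDiff ℝ 4 u)
    (hupos : ∀ x, 0 < u x)
    (hsuper : ∀ x, laplacian u x ≤ 0)
    (hw : ∀ x, w x = laplacian u x + α * ‖gradient u x‖ ^ 2 / (u x + ε) +
      β * ‖x‖ ^ (a / 2) * u x ^ ((p + 1) / 2))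
    (hineq : ∀ x, laplacian w x
        - 2 * α * (u x + ε)⁻¹ * ⟪gradient u x, gradient w x⟫
        + α * w x * ((u x + ε) ^ 2)⁻¹ * ‖gradient u x‖ ^ 2
        - (β * (p + 1) / 2) * ‖x‖ ^ (a / 2) * u x ^ ((p - 1) / 2) * w x ≥ 0) :
    ∀ x, 0 ≤ w x → 0 ≤ laplacian (fun y => (u y + ε) ^ (-α) * w y) x := by
  intro x hwx
  rcases Nat.eq_zero_or_pos n with hn | hn
  · subst hn
    unfold laplacian
    simp
  have hv : ∀ y, 0 < u y + ε := fun y => by have := hupos y; linarith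
  have cs0 : ContDiff ℝ 2 (fun y => laplacian u y + α * ‖gradient u y‖ ^ 2 / (u y + ε)) :=
    contDiff_s0 hu hv
  have huq : ContDiff ℝ 2 (fun y => u y ^ ((p + 1) / 2)) := contDiff_uq hu hupos _
  have hcf : ContDiff ℝ 2 (fun y => (u y + ε) ^ (-α)) := contDiff_f hu hv
  have caseEq : ∀ S : EuclideanSpace ℝ (Fin n) → ℝ, ContDiffAt ℝ 2 S x → (∀ y, w y = S y)
      → 0 ≤ laplacian (fun y => (u y + ε) ^ (-α) * w y) x := by
    intro S hS hWS
    have hev : w =ᶠ[nhds x] S := Filter.Eventually.of_forall hWS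
    have hev2 : (fun y => (u y + ε) ^ (-α) * w y) =ᶠ[nhds x]
        (fun y => (u y + ε) ^ (-α) * S y) := Filter.Eventually.of_forall fun y => by
      show (u y + ε) ^ (-α) * w y = (u y + ε) ^ (-α) * S y
      rw [hWS y]
    rw [lap_congr hev2]
    exact main_step p a ε α β hε hα hβ hpα u w hu hupos x (hsuper x) (hineq x) hwx S hS
      (hWS x).symm (grad_congr hev).symm (lap_congr hev).symm
  by_cases hx0 : x = 0
  · subst hx0
    rcases lt_trichotomy a 4 with ha4 | ha4 | ha4
    · rcases eq_or_lt_of_le ha with ha0 | ha0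
      · -- a = 0
        apply caseEq (fun y => (laplacian u y + α * ‖gradient u y‖ ^ 2 / (u y + ε))
          + β * u y ^ ((p + 1) / 2))
        · exact (cs0.add (contDiff_const.mul huq)).contDiffAt
        · intro y
          rw [hw y, ← ha0]
          norm_num
      · -- 0 < a < 4 : singular case
        have hγ0' : (0:ℝ) < a / 4 := by linarith
        have hγ1' : a / 4 < 1 := by linarith
        have hfweq : (fun y => (u y + ε) ^ (-α) * w y)
            = fun y => ((u y + ε) ^ (-α) *
                (laplacian u y + α * ‖gradient u y‖ ^ 2 / (u y + ε)))
              + β * (((u y + ε) ^ (-α) * u y ^ ((p + 1) / 2)) * ((‖y‖ ^ 2 : ℝ)) ^ (a / 4)) := by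
          funext y
          rw [hw y, norm_rpow_eq y a]
          ring
        rw [hfweq]
        rw [caseC hn hγ0' hγ1' hβ _ _ (hcf.mul cs0) (hcf.mul huq)
          (mul_pos (Real.rpow_pos_of_pos (hv 0) _) (Real.rpow_pos_of_pos (hupos 0) _))]
    · -- a = 4
      apply caseEq (fun y => (laplacian u y + α * ‖gradient u y‖ ^ 2 / (u y + ε))
        + β * ‖y‖ ^ 2 * u y ^ ((p + 1) / 2))
      · exact (cs0.add ((contDiff_const.mul (contDiff_norm_sq ℝ)).mul huq)).contDiffAt
      · intro y
        rw [hw y, ha4]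
        have : ‖y‖ ^ ((4:ℝ) / 2) = ‖y‖ ^ 2 := by
          rw [show ((4:ℝ)/2) = ((2:ℕ):ℝ) by norm_num, Real.rpow_natCast]
        rw [this]
    · -- a > 4
      have hγ : (1:ℝ) < a / 4 := by linarith
      obtain ⟨hPd1, hP01, hP21⟩ := keyB hγ _ huq
      obtain ⟨hPd2, hP02, hP22⟩ := keyB hγ _ (hcf.mul huq)
      have hm00 : ((‖(0 : EuclideanSpace ℝ (Fin n))‖ ^ 2 : ℝ)) ^ (a/4) = 0 := by
        rw [norm_zero, show ((0:ℝ) ^ 2 : ℝ) = 0 by norm_num,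
          Real.zero_rpow (by linarith : a/4 ≠ 0)]
      have d1 := decomp (fun y => laplacian u y + α * ‖gradient u y‖ ^ 2 / (u y + ε))
        (fun y => u y ^ ((p + 1) / 2) * ((‖y‖ ^ 2 : ℝ)) ^ (a/4)) β cs0 hPd1
        (by
          show u 0 ^ ((p + 1) / 2) * ((‖(0 : EuclideanSpace ℝ (Fin n))‖ ^ 2 : ℝ)) ^ (a/4) = 0
          rw [hm00, mul_zero]) hP01 hP21
      have d2 := decomp (fun y => (u y + ε) ^ (-α) *
          (laplacian u y + α * ‖gradient u y‖ ^ 2 / (u y + ε)))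
        (fun y => ((u y + ε) ^ (-α) * u y ^ ((p + 1) / 2)) * ((‖y‖ ^ 2 : ℝ)) ^ (a/4)) β
        (hcf.mul cs0) hPd2
        (by
          show ((u 0 + ε) ^ (-α) * u 0 ^ ((p + 1) / 2))
            * ((‖(0 : EuclideanSpace ℝ (Fin n))‖ ^ 2 : ℝ)) ^ (a/4) = 0
          rw [hm00, mul_zero]) hP02 hP22
      have hwfun : w = fun y => (laplacian u y + α * ‖gradient u y‖ ^ 2 / (u y + ε))
          + β * (u y ^ ((p + 1) / 2) * ((‖y‖ ^ 2 : ℝ)) ^ (a/4)) := by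
        funext y
        rw [hw y, norm_rpow_eq y a]
        ring
      have hfwfun : (fun y => (u y + ε) ^ (-α) * w y)
          = fun y => ((u y + ε) ^ (-α) *
              (laplacian u y + α * ‖gradient u y‖ ^ 2 / (u y + ε)))
            + β * (((u y + ε) ^ (-α) * u y ^ ((p + 1) / 2)) * ((‖y‖ ^ 2 : ℝ)) ^ (a/4)) := by
        funext y
        rw [hw y, norm_rpow_eq y a]
        ring
      have e1 : w 0 = laplacian u 0 + α * ‖gradient u 0‖ ^ 2 / (u 0 + ε) := by
        rw [hwfun]; exact d1.1
      have e2 : gradient w 0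
          = gradient (fun y => laplacian u y + α * ‖gradient u y‖ ^ 2 / (u y + ε)) 0 := by
        rw [hwfun]; exact d1.2.1
      have e3 : laplacian w 0
          = laplacian (fun y => laplacian u y + α * ‖gradient u y‖ ^ 2 / (u y + ε)) 0 := by
        rw [hwfun]; exact d1.2.2
      have e4 : laplacian (fun y => (u y + ε) ^ (-α) * w y) 0
          = laplacian (fun y => (u y + ε) ^ (-α) *
              (laplacian u y + α * ‖gradient u y‖ ^ 2 / (u y + ε))) 0 := by
        rw [hfwfun]; exact d2.2.2
      rw [e4]
      exact main_step p a ε α β hε hα hβ hpα u w hu hupos 0 (hsuper 0) (hineq 0) hwx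
        _ cs0.contDiffAt e1.symm e2.symm e3.symm
  · -- x ≠ 0
    apply caseEq (fun y => (laplacian u y + α * ‖gradient u y‖ ^ 2 / (u y + ε))
      + β * ‖y‖ ^ (a / 2) * u y ^ ((p + 1) / 2))
    · refine cs0.contDiffAt.add (ContDiffAt.mul (contDiffAt_const.mul
        ((contDiffAt_norm ℝ hx0).rpow_const_of_ne (norm_ne_zero_iff.mpr hx0)))
        huq.contDiffAt)
    · intro y
      exact hw y
end
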